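/- arXiv:1810.09575 — 2 statements merged into one kernel-verified Lean document; each statement's English description precedes it below -/
import Mathlib

section
/- For every α : Finset Q and every β ∈ Z_X(S): α ∩ β ∈ S_Z if and only if β ∈ Z(G_α), and α ∩ β ∈ Z_Z(S) if and only if β ∈ Z(H_α). (Lemma A1.) -/
open Finset
open scoped symmDiff Matrix

namespace CC

variable {Q : Type*} [Fintype Q] [DecidableEq Q]

/-- A subgroup of the abelian group `(Finset Q, ∆)`. -/
def IsSubgroup (S : Set (Finset Q)) : Prop :=
  ∅ ∈ S ∧ ∀ a ∈ S, ∀ b ∈ S, a ∆ b ∈ S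

/-- The subgroup of `(Finset Q, ∆)` generated by a set. -/
def closure (T : Set (Finset Q)) : Set (Finset Q) :=
  ⋂₀ {S : Set (Finset Q) | IsSubgroup S ∧ T ⊆ S}

/-- A CSS stabilizer code on the qubits `Q`. -/
structure CSS (Q : Type*) [Fintype Q] [DecidableEq Q] where
  SX : Set (Finset Q)
  SZ : Set (Finset Q)
  hSX : IsSubgroup SX
  hSZ : IsSubgroup SZ
  comm : ∀ a ∈ SZ, ∀ b ∈ SX, 2 ∣ (a ∩ b).card

def ZX (C : CSS Q) : Set (Finset Q) := {γ | ∀ f ∈ C.SZ, 2 ∣ (γ ∩ f).card}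

def ZZ (C : CSS Q) : Set (Finset Q) := {z | ∀ c ∈ C.SX, 2 ∣ (z ∩ c).card}

/-- Duality assumption. -/
def Dual (C : CSS Q) : Prop :=
  C.SZ = {z | ∀ γ ∈ ZX C, 2 ∣ (z ∩ γ).card} ∧
  C.SX = {c | ∀ z ∈ ZZ C, 2 ∣ (c ∩ z).card}

def LogicalX (C : CSS Q) (l : Finset Q) : Prop := l ∈ ZX C ∧ l ∉ C.SX

def LogicalZ (C : CSS Q) (l : Finset Q) : Prop := l ∈ ZZ C ∧ l ∉ C.SZ

/-- Single-logical-qubit assumption. -/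
def SingleQubit (C : CSS Q) : Prop :=
  (ZX C ≠ C.SX ∧ ∀ l l', LogicalX C l → LogicalX C l' → l ∆ l' ∈ C.SX) ∧
  (ZZ C ≠ C.SZ ∧ ∀ l l', LogicalZ C l → LogicalZ C l' → l ∆ l' ∈ C.SZ)

/-- Intersection axiom. -/
def Inter (C : CSS Q) : Prop :=
  ZZ C = {x | ∃ α ∈ ZX C, ∃ β ∈ ZX C, x = α ∩ β}

def G (C : CSS Q) (α : Finset Q) : Set (Finset Q) :=
  closure (C.SZ ∪ {x | ∃ β ∈ ZX C, x = α ∩ β})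

def H (C : CSS Q) (α : Finset Q) : Set (Finset Q) :=
  closure (C.SZ ∪ {x | ∃ β ∈ C.SX, x = α ∩ β})

def Zof (K : Set (Finset Q)) : Set (Finset Q) := {γ | ∀ h ∈ K, 2 ∣ (γ ∩ h).card}

def Tolerable (C : CSS Q) (α : Finset Q) : Prop := ∀ z ∈ G C α, ¬ LogicalZ C z

def g (b : Q → ℤ) (s : Finset Q) : ℤ := ∑ q ∈ s, b q

/-- T-invariance assumption. -/
def TInv (C : CSS Q) (b : Q → ℤ) : Prop :=
  (∀ β ∈ C.SX, (8 : ℤ) ∣ g b β) ∧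
  (∀ β ∈ C.SX, ∀ γ ∈ ZX C, (8 : ℤ) ∣ (g b β - 2 * g b (γ ∩ β)))

def E (C : CSS Q) (b : Q → ℤ) (α : Finset Q) : Set (Finset Q) :=
  {z | ∀ γ ∈ Zof (G C α), g b (γ ∩ α) ≡ 2 * ((z ∩ γ).card : ℤ) [ZMOD 4]}

/- Quantum setting -/

abbrev M (Q : Type*) [Fintype Q] [DecidableEq Q] :=
  Matrix (Q → ZMod 2) (Q → ZMod 2) ℂ

def supp (v : Q → ZMod 2) : Finset Q := Finset.univ.filter (fun q => v q = 1)

def ind (α : Finset Q) : Q → ZMod 2 := fun q => if q ∈ α then 1 else 0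

def XM (α : Finset Q) : M Q :=
  Matrix.of fun u v => if u = v + ind α then (1 : ℂ) else 0

noncomputable def ZM (α : Finset Q) : M Q :=
  Matrix.diagonal fun v => (-1 : ℂ) ^ (supp v ∩ α).card

noncomputable def AM (b : Q → ℤ) (α : Finset Q) : M Q :=
  Matrix.diagonal fun v => Complex.I ^ (g b (α ∩ supp v))

noncomputable def UM (b : Q → ℤ) : M Q :=
  Matrix.diagonal fun v => Complex.exp (Real.pi * Complex.I / 4) ^ (g b (supp v))

def Encoded (C : CSS Q) (ρ : M Q) : Prop :=
  ρ.trace = 1 ∧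
  (∀ c ∈ C.SX, XM c * ρ = ρ ∧ ρ * XM c = ρ) ∧
  (∀ f ∈ C.SZ, ZM f * ρ = ρ ∧ ρ * ZM f = ρ)

instance : Std.Commutative (α := Finset Q) (· ∆ ·) := ⟨symmDiff_comm⟩
instance : Std.Associative (α := Finset Q) (· ∆ ·) := ⟨symmDiff_assoc⟩

/-- Iterated symmetric difference over a finite index set. -/
def bigΔ {ι : Type*} (s : Finset ι) (f : ι → Finset Q) : Finset Q :=
  s.fold (· ∆ ·) ∅ f

lemma even_card_symmDiff {s t : Finset Q} (hs : 2 ∣ s.card) (ht : 2 ∣ t.card) :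
    2 ∣ (s ∆ t).card := by
  have h1 : (s ∆ t).card = (s \ t).card + (t \ s).card := by
    rw [symmDiff_def, sup_eq_union]
    exact Finset.card_union_of_disjoint (disjoint_sdiff_sdiff)
  have h2 : (s \ t).card + (s ∩ t).card = s.card := Finset.card_sdiff_add_card_inter s t
  have h3 : (t \ s).card + (t ∩ s).card = t.card := Finset.card_sdiff_add_card_inter t s
  have h4 : (s ∩ t).card = (t ∩ s).card := by rw [Finset.inter_comm]
  omega

lemma isSubgroup_even (β : Finset Q) : IsSubgroup {h : Finset Q | 2 ∣ (β ∩ h).card} := by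
  constructor
  · simp
  · intro a ha b hb
    show 2 ∣ (β ∩ (a ∆ b)).card
    have : β ∩ (a ∆ b) = (β ∩ a) ∆ (β ∩ b) := by
      ext q; simp [Finset.mem_symmDiff]; tauto
    rw [this]
    exact even_card_symmDiff ha hb

lemma closure_subset {T P : Set (Finset Q)} (hP : IsSubgroup P) (hTP : T ⊆ P) :
    closure T ⊆ P := fun _ hx => hx P ⟨hP, hTP⟩

lemma subset_closure {T : Set (Finset Q)} : T ⊆ closure T :=
  fun _ hx _ hP => hP.2 hx

lemma inter_rot (a b c : Finset Q) : (a ∩ b) ∩ c = b ∩ (a ∩ c) := by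
  rw [Finset.inter_comm a b, Finset.inter_assoc]

/-- Lemma A1. -/
theorem mem_SZ_iff_Zof_G
    (C : CSS Q) (hdual : Dual C) (hinter : Inter C)
    (α β : Finset Q) (hβ : β ∈ ZX C) :
    (α ∩ β ∈ C.SZ ↔ β ∈ Zof (G C α)) ∧
    (α ∩ β ∈ ZZ C ↔ β ∈ Zof (H C α)) := by
  constructor
  · constructor
    · intro h γ hγ
      have : G C α ⊆ {h : Finset Q | 2 ∣ (β ∩ h).card} := by
        apply closure_subset (isSubgroup_even β)
        rintro x (hx | ⟨δ, hδ, rfl⟩)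
        · exact hβ x hx
        · show 2 ∣ (β ∩ (α ∩ δ)).card
          rw [← inter_rot]
          rw [Finset.inter_comm]
          exact hδ _ h
      exact this hγ
    · intro h
      rw [hdual.1]
      intro γ hγ
      show 2 ∣ ((α ∩ β) ∩ γ).card
      rw [inter_rot]
      exact h _ (subset_closure (Or.inr ⟨γ, hγ, rfl⟩))
  · constructor
    · intro h γ hγ
      have : H C α ⊆ {h : Finset Q | 2 ∣ (β ∩ h).card} := by
        apply closure_subset (isSubgroup_even β)
        rintro x (hx | ⟨c, hc, rfl⟩)
        · exact hβ x hx
        · show 2 ∣ (β ∩ (α ∩ c)).card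
          rw [← inter_rot]
          exact h c hc
      exact this hγ
    · intro h c hc
      show 2 ∣ ((α ∩ β) ∩ c).card
      rw [inter_rot]
      exact h _ (subset_closure (Or.inr ⟨c, hc, rfl⟩))

end CC
end

section
/- Let (S_X, S_Z) be a CSS stabilizer code on a finite type Q satisfying the duality and intersection assumptions, let ρ be an encoded state, let α : Finset Q, and let β ∈ S_X with β ∈ Z(G_α). Then g(α ∩ β) is even and trace(ρ · A_α · X_β · A_α†) = i^{g(α ∩ β)} = (−1)^{g(α ∩ β)/2}. (Lemma A4(i).) -/
open Finset
open scoped symmDiff Matrix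

namespace CC

variable {Q : Type*} [Fintype Q] [DecidableEq Q]

lemma g_symmDiff (b : Q → ℤ) (s t : Finset Q) :
    g b (s ∆ t) + 2 * g b (s ∩ t) = g b s + g b t := by
  classical
  have h1 : s ∆ t = (s ∪ t) \ (s ∩ t) := by
    ext q; simp [Finset.mem_symmDiff]; tauto
  have h2 : g b (s ∪ t) + g b (s ∩ t) = g b s + g b t := by
    simpa [g] using Finset.sum_union_inter (s₁ := s) (s₂ := t) (f := b)
  have h3 : g b ((s ∪ t) \ (s ∩ t)) + g b (s ∩ t) = g b (s ∪ t) := by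
    simpa [g] using Finset.sum_sdiff (f := b)
      (Finset.inter_subset_union (s := s) (t := t))
  rw [h1]; linarith

lemma g_card_even (b : Q → ℤ) (hb : ∀ q, Odd (b q)) (t : Finset Q) :
    Even (g b t - (t.card : ℤ)) := by
  classical
  have : g b t - (t.card : ℤ) = ∑ q ∈ t, (b q - 1) := by
    simp [g, Finset.sum_sub_distrib]
  rw [this]
  exact Finset.even_sum _ fun q _ => by
    obtain ⟨k, hk⟩ := hb q; exact ⟨k, by omega⟩

lemma neg_one_zpow_eq (m : ℤ) (n : ℕ) (h : Even (m - (n : ℤ))) :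
    (-1 : ℂ) ^ m = (-1 : ℂ) ^ n := by
  obtain ⟨k, hk⟩ := h
  have hm : m = (n : ℤ) + 2 * k := by omega
  have hne : (-1 : ℂ) ≠ 0 := by norm_num
  rw [hm, zpow_add₀ hne, zpow_natCast, zpow_mul]
  norm_num

lemma supp_add_ind (v : Q → ZMod 2) (β : Finset Q) :
    supp (v + ind β) = supp v ∆ β := by
  ext q
  by_cases hq : q ∈ β <;>
    simp only [supp, Finset.mem_filter, Finset.mem_univ, true_and] <;>
    simp [ind, hq, Finset.mem_symmDiff] <;>
    generalize v q = x <;> revert x <;> decide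

lemma mem_G_inter (C : CSS Q) {α γ : Finset Q} (hγ : γ ∈ ZX C) :
    α ∩ γ ∈ G C α := by
  intro S hS
  exact hS.2 (Or.inr ⟨γ, hγ, rfl⟩)

lemma conj_XM (b : Q → ℤ) (hb : ∀ q, Odd (b q)) (α β : Finset Q) :
    AM b α * XM β * (AM b α)ᴴ =
      Complex.I ^ (g b (α ∩ β)) • (XM β * ZM (α ∩ β)) := by
  classical
  have hIne : Complex.I ≠ 0 := Complex.I_ne_zero
  have hstar : ∀ m : ℤ, star (Complex.I ^ m) = Complex.I ^ (-m) := by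
    intro m
    rw [star_zpow₀, show star Complex.I = Complex.I⁻¹ by
      simp [Complex.star_def, Complex.conj_I, Complex.inv_I],
      inv_zpow, ← zpow_neg]
  have hI2 : (Complex.I : ℂ) ^ (2 : ℤ) = -1 := by
    rw [show (2 : ℤ) = 1 + 1 from rfl, zpow_add₀ hIne, zpow_one, Complex.I_mul_I]
  conv_lhs => rw [AM, Matrix.diagonal_conjTranspose]
  ext u v
  simp only [Matrix.mul_diagonal, Matrix.diagonal_mul, XM, ZM, Matrix.of_apply,
    Matrix.smul_apply, smul_eq_mul, Pi.star_apply]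
  by_cases h : u = v + ind β
  · subst h
    simp only [if_pos rfl, if_true, one_mul, mul_one]
    rw [supp_add_ind]
    rw [show α ∩ (supp v ∆ β) = (α ∩ supp v) ∆ (α ∩ β) by
      ext q; simp [Finset.mem_symmDiff]; tauto]
    rw [hstar, ← zpow_add₀ hIne]
    have hset : (α ∩ supp v) ∩ (α ∩ β) = supp v ∩ (α ∩ β) := by
      ext q; simp; tauto
    have hkey := g_symmDiff b (α ∩ supp v) (α ∩ β)
    rw [hset] at hkey
    have harith : g b ((α ∩ supp v) ∆ (α ∩ β)) + -(g b (α ∩ supp v))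
        = g b (α ∩ β) + 2 * (-(g b (supp v ∩ (α ∩ β)))) := by linarith
    rw [harith, zpow_add₀ hIne, zpow_mul, hI2]
    congr 1
    apply neg_one_zpow_eq
    obtain ⟨k, hk⟩ := g_card_even b hb (supp v ∩ (α ∩ β))
    exact ⟨-(k + ((supp v ∩ (α ∩ β)).card : ℤ)), by omega⟩
  · simp only [if_neg h, mul_zero, zero_mul]

/-- Lemma A4(i): for `β ∈ S_X ∩ Z(G_α)`, `g(α ∩ β)` is even and
`⟨A_α X_β A_α†⟩_ρ = i^{g(α ∩ β)} = (−1)^{g(α ∩ β)/2}`. -/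
theorem expectation_commuting_stabilizer
    (C : CSS Q) (b : Q → ℤ) (hb : ∀ q, Odd (b q))
    (hdual : Dual C) (hinter : Inter C)
    (ρ : M Q) (hρ : Encoded C ρ)
    (α β : Finset Q) (hβ : β ∈ C.SX) (hβ' : β ∈ Zof (G C α)) :
    Even (g b (α ∩ β)) ∧
    (ρ * (AM b α * XM β * (AM b α)ᴴ)).trace = Complex.I ^ (g b (α ∩ β)) ∧
    Complex.I ^ (g b (α ∩ β)) = (-1 : ℂ) ^ (g b (α ∩ β) / 2) := by
  classical
  -- α ∩ β ∈ S_Z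
  have hSZ : α ∩ β ∈ C.SZ := by
    rw [hdual.1]
    intro γ hγ
    have h1 := hβ' _ (mem_G_inter C hγ)
    have : (α ∩ β) ∩ γ = β ∩ (α ∩ γ) := by ext q; simp; tauto
    rwa [this]
  -- evenness of the cardinality
  have hcard : 2 ∣ (α ∩ β).card := by
    have := C.comm _ hSZ _ hβ
    rwa [Finset.inter_assoc, Finset.inter_self] at this
  have heven : Even (g b (α ∩ β)) := by
    obtain ⟨k, hk⟩ := hcard
    obtain ⟨m, hm⟩ := g_card_even b hb (α ∩ β)
    exact ⟨m + k, by omega⟩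
  refine ⟨heven, ?_, ?_⟩
  · rw [conj_XM b hb α β]
    rw [Matrix.mul_smul, Matrix.trace_smul, smul_eq_mul]
    have hZρ : ZM (α ∩ β) * ρ = ρ := (hρ.2.2 _ hSZ).1
    have hXρ : XM β * ρ = ρ := (hρ.2.1 _ hβ).1
    have : (ρ * (XM β * ZM (α ∩ β))).trace = 1 := by
      rw [← mul_assoc, Matrix.trace_mul_comm, ← mul_assoc, hZρ,
        Matrix.trace_mul_comm, hXρ, hρ.1]
    rw [this, mul_one]
  · obtain ⟨k, hk⟩ := heven
    have h2 : g b (α ∩ β) = 2 * k := by omega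
    have h3 : g b (α ∩ β) / 2 = k := by omega
    have hI2 : (Complex.I : ℂ) ^ (2 : ℤ) = -1 := by
      rw [show (2 : ℤ) = 1 + 1 from rfl, zpow_add₀ Complex.I_ne_zero, zpow_one,
        Complex.I_mul_I]
    rw [h3, h2, zpow_mul, hI2]

end CC
end
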